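/- (Deduction theorem) For every theory Σ and all finite subsets A, B of T_Y, the following are equivalent: (1) Σ ∪ {∅ ⇒ A} ⊢ ∅ ⇒ B; (2) there exist finitely many integers i_1, …, i_n ∈ ℤ such that Σ ⊢ ⋃_{m=1}^n (A + i_m) ⇒ B. -/

import Mathlib

namespace TAI

variable {Y : Type*}

/-- Time shift of a set of time-annotated attributes: `M + j`. -/
def shiftS (M : Set (Y × ℤ)) (j : ℤ) : Set (Y × ℤ) :=
  (fun p : Y × ℤ => (p.1, p.2 + j)) '' M

/-- Time shift of a finite set of time-annotated attributes: `A + j`. -/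
def shiftF [DecidableEq Y] (A : Finset (Y × ℤ)) (j : ℤ) : Finset (Y × ℤ) :=
  A.image (fun p => (p.1, p.2 + j))

/-- An attribute implication over `Y` annotated by time points: a pair
`(A, B)` of finite subsets of `T_Y = Y × ℤ`, read as `A ⇒ B`. -/
abbrev Fml (Y : Type*) := Finset (Y × ℤ) × Finset (Y × ℤ)

/-- `A ⇒ B` is true in `M ⊆ T_Y`: for every `i ∈ ℤ`, `A + i ⊆ M` implies `B + i ⊆ M`. -/
def Holds [DecidableEq Y] (M : Set (Y × ℤ)) (φ : Fml Y) : Prop :=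
  ∀ i : ℤ, ↑(shiftF φ.1 i) ⊆ M → ↑(shiftF φ.2 i) ⊆ M

/-- The models of a theory `T`. -/
def Mods [DecidableEq Y] (T : Set (Fml Y)) : Set (Set (Y × ℤ)) :=
  {M | ∀ φ ∈ T, Holds M φ}

/-- Semantic entailment: `T ⊨ φ`. -/
def Entails [DecidableEq Y] (T : Set (Fml Y)) (φ : Fml Y) : Prop :=
  ∀ M ∈ Mods T, Holds M φ

/-- Semantic closure `[M]_Σ`. -/
def semClos [DecidableEq Y] (T : Set (Fml Y)) (M : Set (Y × ℤ)) : Set (Y × ℤ) :=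
  ⋂₀ {N | N ∈ Mods T ∧ M ⊆ N}

/-- Classical (time-point-free) truth: `M ⊨_PL A ⇒ B` iff `A ⊆ M` implies `B ⊆ M`. -/
def HoldsPL (M : Set (Y × ℤ)) (φ : Fml Y) : Prop :=
  ↑φ.1 ⊆ M → ↑φ.2 ⊆ M

/-- Classical models. -/
def ModsPL (T : Set (Fml Y)) : Set (Set (Y × ℤ)) :=
  {M | ∀ φ ∈ T, HoldsPL M φ}

/-- Classical semantic entailment `⊨_PL`. -/
def EntailsPL (T : Set (Fml Y)) (φ : Fml Y) : Prop :=
  ∀ M ∈ ModsPL T, HoldsPL M φ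

/-- `Σ^PL = {A + i ⇒ B + i | A ⇒ B ∈ Σ, i ∈ ℤ}`. -/
def shiftAll [DecidableEq Y] (T : Set (Fml Y)) : Set (Fml Y) :=
  {ψ | ∃ φ ∈ T, ∃ i : ℤ, ψ = (shiftF φ.1 i, shiftF φ.2 i)}

/-- One step of the syntactic closure construction. -/
def synStep [DecidableEq Y] (T : Set (Fml Y)) (M : Set (Y × ℤ)) : Set (Y × ℤ) :=
  M ∪ ⋃₀ {S | ∃ φ ∈ T, ∃ i : ℤ, ↑(shiftF φ.1 i) ⊆ M ∧ S = (↑(shiftF φ.2 i) : Set (Y × ℤ))}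

/-- `M_Σ^n`. -/
def synIter [DecidableEq Y] (T : Set (Fml Y)) (M : Set (Y × ℤ)) : ℕ → Set (Y × ℤ)
  | 0 => M
  | n + 1 => synStep T (synIter T M n)

/-- The syntactic closure `M_Σ^ω`. -/
def synClos [DecidableEq Y] (T : Set (Fml Y)) (M : Set (Y × ℤ)) : Set (Y × ℤ) :=
  ⋃ n : ℕ, synIter T M n

/-- Provability from `T` using the rules (Ax), (Cut) and (Shf). -/
inductive Prov [DecidableEq Y] (T : Set (Fml Y)) : Fml Y → Prop
  | hyp {φ : Fml Y} : φ ∈ T → Prov T φ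
  | ax (A B : Finset (Y × ℤ)) : Prov T (A ∪ B, A)
  | cut {A B C D : Finset (Y × ℤ)} :
      Prov T (A, B) → Prov T (B ∪ C, D) → Prov T (A ∪ C, D)
  | shf {A B : Finset (Y × ℤ)} (i : ℤ) :
      Prov T (A, B) → Prov T (shiftF A i, shiftF B i)

/-- Provability from `T` using only the rules (Ax) and (Cut) (no time shifts). -/
inductive ProvAC [DecidableEq Y] (T : Set (Fml Y)) : Fml Y → Prop
  | hyp {φ : Fml Y} : φ ∈ T → ProvAC T φ
  | ax (A B : Finset (Y × ℤ)) : ProvAC T (A ∪ B, A)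
  | cut {A B C D : Finset (Y × ℤ)} :
      ProvAC T (A, B) → ProvAC T (B ∪ C, D) → ProvAC T (A ∪ C, D)

/-- Provability from `T` using the rules (Ax) and (Cut_i). -/
inductive ProvCuti [DecidableEq Y] (T : Set (Fml Y)) : Fml Y → Prop
  | hyp {φ : Fml Y} : φ ∈ T → ProvCuti T φ
  | ax (A B : Finset (Y × ℤ)) : ProvCuti T (A ∪ B, A)
  | cuti {A B C D : Finset (Y × ℤ)} (i : ℤ) :
      ProvCuti T (A, shiftF B i) → ProvCuti T (B ∪ C, D) →
      ProvCuti T (A ∪ shiftF C i, shiftF D i)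

/-- Provability from `T` using the rules (Ref) and (Sim_i). -/
inductive ProvRS [DecidableEq Y] (T : Set (Fml Y)) : Fml Y → Prop
  | hyp {φ : Fml Y} : φ ∈ T → ProvRS T φ
  | ref (A : Finset (Y × ℤ)) : ProvRS T (A, A)
  | simi {A B C D : Finset (Y × ℤ)} (i : ℤ) :
      ProvRS T (A, shiftF B i) → ProvRS T (C, D) →
      ProvRS T (A ∪ shiftF (C \ B) i, shiftF D i)

/-- The closure operator induced by a closure system `S`. -/
def closOp (S : Set (Set (Y × ℤ))) (M : Set (Y × ℤ)) : Set (Y × ℤ) :=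
  ⋂₀ {N | N ∈ S ∧ M ⊆ N}

/-- The least time point occurring in a finite set (`0` for the empty set). -/
def lo (A : Finset (Y × ℤ)) : ℤ :=
  WithTop.untopD 0 (A.image Prod.snd).min

/-- The greatest time point occurring in a finite set (`0` for the empty set). -/
def hi (A : Finset (Y × ℤ)) : ℤ :=
  WithBot.unbotD 0 (A.image Prod.snd).max

/-- A formula `A ⇒ B` is predictive if `A ≠ ∅`, `B ≠ ∅`, and every time point in
`A` is less than or equal to every time point in `B`. -/
def Predictive (φ : Fml Y) : Prop :=
  φ.1.Nonempty ∧ φ.2.Nonempty ∧ ∀ p ∈ φ.1, ∀ q ∈ φ.2, p.2 ≤ q.2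

section Aux

variable [DecidableEq Y]

lemma shiftF_zero (A : Finset (Y × ℤ)) : shiftF A 0 = A := by
  simp [shiftF]

lemma shiftF_shiftF (A : Finset (Y × ℤ)) (j i : ℤ) :
    shiftF (shiftF A j) i = shiftF A (j + i) := by
  unfold shiftF
  rw [Finset.image_image]
  congr 1
  funext p
  simp [Function.comp, add_assoc]

lemma shiftF_union (A B : Finset (Y × ℤ)) (i : ℤ) :
    shiftF (A ∪ B) i = shiftF A i ∪ shiftF B i := by
  simp [shiftF, Finset.image_union]

lemma shiftF_empty (i : ℤ) : shiftF (∅ : Finset (Y × ℤ)) i = ∅ := by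
  simp [shiftF]

lemma prov_mono {T T' : Set (Fml Y)} (hTT : T ⊆ T') {φ : Fml Y}
    (h : Prov T φ) : Prov T' φ := by
  induction h with
  | hyp h => exact Prov.hyp (hTT h)
  | ax A B => exact Prov.ax A B
  | cut _ _ ih1 ih2 => exact Prov.cut ih1 ih2
  | shf i _ ih => exact Prov.shf i ih

lemma prov_weak {T : Set (Fml Y)} {A B : Finset (Y × ℤ)} (C : Finset (Y × ℤ))
    (h : Prov T (A, B)) : Prov T (A ∪ C, B) := by
  have h' : Prov T (A ∪ ∅, B) := by rwa [Finset.union_empty]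
  have := Prov.cut (Prov.ax A C) h'
  rwa [Finset.union_empty] at this

lemma prov_trans {T : Set (Fml Y)} {A B C : Finset (Y × ℤ)}
    (h1 : Prov T (A, B)) (h2 : Prov T (B, C)) : Prov T (A, C) := by
  have h2' : Prov T (B ∪ ∅, C) := by rwa [Finset.union_empty]
  have := Prov.cut h1 h2'
  rwa [Finset.union_empty] at this

lemma prov_add {T : Set (Fml Y)} {A B C : Finset (Y × ℤ)}
    (h1 : Prov T (A, B)) (h2 : Prov T (A, C)) : Prov T (A, B ∪ C) := by
  have h2' : Prov T (B ∪ A, C) := by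
    have := prov_weak B h2; rwa [Finset.union_comm] at this
  have hax : Prov T (C ∪ (B ∪ A), B ∪ C) := by
    have h0 : Prov T ((B ∪ C) ∪ A, B ∪ C) := Prov.ax _ _
    have he : (B ∪ C) ∪ A = C ∪ (B ∪ A) := by
      ext x; simp [Finset.mem_union]; tauto
    rwa [he] at h0
  have h3 : Prov T ((B ∪ A) ∪ (B ∪ A), B ∪ C) := Prov.cut h2' hax
  rw [Finset.union_self] at h3
  have h4 := Prov.cut h1 h3
  rwa [Finset.union_self] at h4

/-- The union of all shifts of `A` by elements of `I`. -/
def shiftU (A : Finset (Y × ℤ)) (I : Finset ℤ) : Finset (Y × ℤ) :=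
  I.biUnion (shiftF A)

lemma shiftU_union (A : Finset (Y × ℤ)) (I J : Finset ℤ) :
    shiftU A (I ∪ J) = shiftU A I ∪ shiftU A J := by
  ext x
  simp only [shiftU, Finset.mem_biUnion, Finset.mem_union, or_and_right, exists_or]

lemma shiftF_shiftU (A : Finset (Y × ℤ)) (I : Finset ℤ) (i : ℤ) :
    shiftF (shiftU A I) i = shiftU A (I.image (· + i)) := by
  ext x
  simp only [shiftU, shiftF, Finset.mem_image, Finset.mem_biUnion]
  constructor
  · rintro ⟨p, ⟨j, hj, hp⟩, rfl⟩
    obtain ⟨a, ha, rfl⟩ := hp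
    exact ⟨j + i, ⟨j, hj, rfl⟩, a, ha, by simp [add_assoc]⟩
  · rintro ⟨k, ⟨j, hj, rfl⟩, a, ha, rfl⟩
    exact ⟨(a.1, a.2 + j), ⟨j, hj, a, ha, rfl⟩, by simp [add_assoc]⟩

/-- Key lemma for the deduction theorem: anything provable from `T ∪ {∅ ⇒ A}`
is provable from `T` after adding finitely many shifts of `A` to the premise. -/
lemma deduction_aux {T : Set (Fml Y)} {A : Finset (Y × ℤ)} {φ : Fml Y}
    (h : Prov (T ∪ {((∅ : Finset (Y × ℤ)), A)}) φ) :
    ∃ I : Finset ℤ, Prov T (φ.1 ∪ shiftU A I, φ.2) := by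
  induction h with
  | @hyp φ h =>
    rcases h with h | h
    · exact ⟨∅, by simpa [shiftU] using prov_weak ∅ (Prov.hyp h : Prov T (φ.1, φ.2))⟩
    · refine ⟨{0}, ?_⟩
      have he : φ.1 ∪ shiftU A {0} = A ∪ ∅ := by
        simp only [Set.mem_singleton_iff] at h
        simp [h, shiftU, shiftF_zero]
      rw [he]
      simp only [Set.mem_singleton_iff] at h
      have : φ.2 = A := by rw [h]
      rw [this]
      exact Prov.ax A ∅
  | ax A' B' =>
    exact ⟨∅, by simpa [shiftU] using prov_weak ∅ (Prov.ax A' B')⟩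
  | @cut A' B' C' D' h1 h2 ih1 ih2 =>
    obtain ⟨I1, hI1⟩ := ih1
    obtain ⟨I2, hI2⟩ := ih2
    refine ⟨I1 ∪ I2, ?_⟩
    have hI1' : Prov T (A' ∪ shiftU A (I1 ∪ I2), B') := by
      have := prov_weak (shiftU A I2) hI1
      have he : (A' ∪ shiftU A I1) ∪ shiftU A I2 = A' ∪ shiftU A (I1 ∪ I2) := by
        rw [shiftU_union, Finset.union_assoc]
      rwa [he] at this
    have hI2' : Prov T (B' ∪ (C' ∪ shiftU A (I1 ∪ I2)), D') := by
      have := prov_weak (shiftU A I1) hI2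
      have he : ((B' ∪ C') ∪ shiftU A I2) ∪ shiftU A I1
          = B' ∪ (C' ∪ shiftU A (I1 ∪ I2)) := by
        rw [shiftU_union]
        ext x; simp only [Finset.mem_union]; tauto
      rwa [he] at this
    have := Prov.cut hI1' hI2'
    have he : (A' ∪ shiftU A (I1 ∪ I2)) ∪ (C' ∪ shiftU A (I1 ∪ I2))
        = (A' ∪ C') ∪ shiftU A (I1 ∪ I2) := by
      ext x; simp only [Finset.mem_union]; tauto
    rwa [he] at this
  | @shf A' B' i h ih =>
    obtain ⟨I, hI⟩ := ih
    refine ⟨I.image (· + i), ?_⟩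
    have := Prov.shf i hI
    rwa [shiftF_union, shiftF_shiftU] at this

lemma prov_biUnion {T : Set (Fml Y)} {α : Type*} [DecidableEq α]
    (s : Finset α) (f : α → Finset (Y × ℤ))
    (h : ∀ a ∈ s, Prov T (∅, f a)) :
    Prov T (∅, s.biUnion f) := by
  induction s using Finset.induction_on with
  | empty =>
    simpa using Prov.ax (∅ : Finset (Y × ℤ)) ∅
  | @insert a s ha ih =>
    rw [Finset.biUnion_insert]
    exact prov_add (h a (Finset.mem_insert_self a s))
      (ih fun b hb => h b (Finset.mem_insert_of_mem hb))

end Aux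

/-- Deduction theorem: `Σ ∪ {∅ ⇒ A} ⊢ ∅ ⇒ B` iff there are
`i_1, …, i_n ∈ ℤ` with `Σ ⊢ ⋃_{m=1}^n (A + i_m) ⇒ B`. -/
theorem deduction_theorem [DecidableEq Y] [Fintype Y] [Nonempty Y]
    (T : Set (Fml Y)) (A B : Finset (Y × ℤ)) :
    Prov (T ∪ {((∅ : Finset (Y × ℤ)), A)}) (∅, B) ↔
      ∃ (n : ℕ) (idx : Fin n → ℤ),
        Prov T ((Finset.univ : Finset (Fin n)).biUnion (fun m => shiftF A (idx m)), B) := by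
  constructor
  · intro h
    obtain ⟨I, hI⟩ := deduction_aux h
    refine ⟨I.card, fun m => (I.equivFin.symm m : ℤ), ?_⟩
    have he : (Finset.univ : Finset (Fin I.card)).biUnion
        (fun m => shiftF A ((I.equivFin.symm m : ℤ))) = shiftU A I := by
      ext x
      simp only [Finset.mem_biUnion, Finset.mem_univ, true_and, shiftU]
      constructor
      · rintro ⟨m, hm⟩
        exact ⟨(I.equivFin.symm m : ℤ), (I.equivFin.symm m).2, hm⟩
      · rintro ⟨j, hj, hx⟩
        refine ⟨I.equivFin ⟨j, hj⟩, ?_⟩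
        simpa using hx
    rw [he]
    simpa [shiftU] using hI
  · rintro ⟨n, idx, hP⟩
    set U := (Finset.univ : Finset (Fin n)).biUnion (fun m => shiftF A (idx m)) with hU
    set T' := T ∪ {((∅ : Finset (Y × ℤ)), A)} with hT'
    have hA : Prov T' ((∅ : Finset (Y × ℤ)), A) := Prov.hyp (Or.inr rfl)
    have hUprov : Prov T' ((∅ : Finset (Y × ℤ)), U) := by
      apply prov_biUnion
      intro m _
      have := Prov.shf (T := T') (idx m) hA
      rwa [shiftF_empty] at this
    have hP' : Prov T' (U, B) := prov_mono Set.subset_union_left hP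
    exact prov_trans hUprov hP'

end TAI
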